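/- Under the assumptions of the previous statement (f continuous, nonnegative, scale-invariant; g positive homogeneous of degree p > 0 and positive-definite; μ > 0), if the infimum of f(X₁, X₂) + μ g(X₁) is attained at (X₁*, X₂*), then X₁* = 0 and f(0, X₂*) = f(0, 0) equals the infimum of f. -/
import Mathlib

theorem stmt9 {m₁ m₂ r : ℕ}
    (f : Matrix (Fin m₁) (Fin r) ℝ → Matrix (Fin m₂) (Fin r) ℝ → ℝ)
    (hf0 : ∀ X₁ X₂, 0 ≤ f X₁ X₂)
    (hfc : Continuous fun P : Matrix (Fin m₁) (Fin r) ℝ × Matrix (Fin m₂) (Fin r) ℝ =>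
      f P.1 P.2)
    (hinv : ∀ X₁ X₂ (d : Fin r → ℝ), (∀ q, 0 < d q) →
      f (X₁ * Matrix.diagonal d) (X₂ * Matrix.diagonal fun q => (d q)⁻¹) = f X₁ X₂)
    (g : Matrix (Fin m₁) (Fin r) ℝ → ℝ) (p : ℝ) (hp : 0 < p)
    (hg0 : ∀ X, 0 ≤ g X)
    (hgh : ∀ c : ℝ, 0 < c → ∀ X, g (c • X) = c ^ p * g X)
    (hgd : ∀ X, g X = 0 ↔ X = 0)
    (μ : ℝ) (hμ : 0 < μ)
    (X₁s : Matrix (Fin m₁) (Fin r) ℝ) (X₂s : Matrix (Fin m₂) (Fin r) ℝ)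
    (hmin : IsLeast {y : ℝ | ∃ X₁ X₂, y = f X₁ X₂ + μ * g X₁}
      (f X₁s X₂s + μ * g X₁s)) :
    X₁s = 0 ∧ f 0 X₂s = f 0 0 ∧
      f 0 X₂s = sInf {y : ℝ | ∃ X₁ X₂, y = f X₁ X₂} := by
  -- matrix scaling rewriting
  have hdiag : ∀ {n : ℕ} (X : Matrix (Fin n) (Fin r) ℝ) (c : ℝ),
      X * Matrix.diagonal (fun _ : Fin r => c) = c • X := by
    intro n X c
    ext i j
    simp [Matrix.mul_diagonal, mul_comm]
  have hscale : ∀ (c : ℝ), 0 < c → ∀ X₁ X₂, f (c • X₁) (c⁻¹ • X₂) = f X₁ X₂ := by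
    intro c hc X₁ X₂
    have := hinv X₁ X₂ (fun _ => c) (fun _ => hc)
    rwa [hdiag, hdiag] at this
  set v := f X₁s X₂s + μ * g X₁s with hv
  -- v ≤ f X₁ X₂ for all X₁ X₂
  have key : ∀ X₁ X₂, v ≤ f X₁ X₂ := by
    intro X₁ X₂
    refine le_of_forall_pos_le_add ?_
    intro ε hε
    set G := g X₁ with hG
    have hG0 : 0 ≤ G := hg0 X₁
    have hbase : 0 < ε / (μ * (G + 1)) := by positivity
    set c : ℝ := (ε / (μ * (G + 1))) ^ p⁻¹ with hc
    have hcpos : 0 < c := Real.rpow_pos_of_pos hbase _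
    have hcp : c ^ p = ε / (μ * (G + 1)) := by
      rw [hc, ← Real.rpow_mul hbase.le, inv_mul_cancel₀ hp.ne', Real.rpow_one]
    have hmem : f (c • X₁) (c⁻¹ • X₂) + μ * g (c • X₁)
        ∈ {y : ℝ | ∃ X₁ X₂, y = f X₁ X₂ + μ * g X₁} := ⟨_, _, rfl⟩
    have hle := hmin.2 hmem
    rw [hscale c hcpos, hgh c hcpos, hcp] at hle
    calc v ≤ f X₁ X₂ + μ * (ε / (μ * (G + 1)) * G) := hle
    _ ≤ f X₁ X₂ + ε := by
      have : μ * (ε / (μ * (G + 1)) * G) ≤ ε := by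
        rw [div_mul_eq_mul_div, mul_div_assoc']
        rw [div_le_iff₀ (by positivity)]
        nlinarith
      linarith
  -- X₁s = 0
  have hgz : g X₁s = 0 := by
    have := key X₁s X₂s
    have := hg0 X₁s
    nlinarith
  have hX1 : X₁s = 0 := (hgd X₁s).mp hgz
  have hvf : v = f 0 X₂s := by rw [hv, hgz, hX1]; ring
  -- f 0 X₂s = f 0 0 by continuity
  have heq : f 0 X₂s = f 0 0 := by
    have hcont : Filter.Tendsto (fun c : ℝ => f 0 (c • X₂s)) (nhdsWithin 0 (Set.Ioi 0))
        (nhds (f 0 0)) := by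
      have : Continuous fun c : ℝ => f 0 (c • X₂s) := by
        exact hfc.comp (continuous_const.prodMk (continuous_id.smul continuous_const))
      have h0 : f 0 ((0 : ℝ) • X₂s) = f 0 0 := by rw [zero_smul]
      simpa [h0] using (this.tendsto 0).mono_left nhdsWithin_le_nhds
    have hconst : Filter.Tendsto (fun c : ℝ => f 0 (c • X₂s)) (nhdsWithin 0 (Set.Ioi 0))
        (nhds (f 0 X₂s)) := by
      refine Filter.Tendsto.congr' ?_ tendsto_const_nhds
      filter_upwards [self_mem_nhdsWithin] with c (hc : 0 < c)
      have := hscale c⁻¹ (by positivity) 0 X₂s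
      rw [smul_zero, inv_inv] at this
      exact this.symm
    exact tendsto_nhds_unique hconst hcont
  refine ⟨hX1, heq, ?_⟩
  have hleast : IsLeast {y : ℝ | ∃ X₁ X₂, y = f X₁ X₂} (f 0 X₂s) := by
    constructor
    · exact ⟨0, X₂s, rfl⟩
    · rintro y ⟨A, B, rfl⟩
      calc f 0 X₂s = v := hvf.symm
      _ ≤ f A B := key A B
  exact (hleast.csInf_eq).symm
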